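/- arXiv:1110.3843 — 7 statements merged into one kernel-verified Lean document; each statement's English description precedes it below -/
import Mathlib

section
/- If G is an r-robust directed graph and G' is obtained from G by removing at most K incoming edges from each node, where K < r, then G' is (r−K)-robust. -/
open Finset

def rReachable {V : Type*} [DecidableEq V] (N : V → Finset V) (S : Finset V) (r : ℕ) : Prop :=
  ∃ i ∈ S, r ≤ ((N i) \ S).card

def rRobust {V : Type*} [Fintype V] [DecidableEq V] (N : V → Finset V) (r : ℕ) : Prop :=
  ∀ S₁ S₂ : Finset V, S₁.Nonempty → S₂.Nonempty → Disjoint S₁ S₂ →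
    rReachable N S₁ r ∨ rReachable N S₂ r

theorem stmt3 {V : Type*} [Fintype V] [DecidableEq V]
    (hcard : 2 ≤ Fintype.card V)
    (N N' : V → Finset V) (K r : ℕ)
    (hsub : ∀ i, N' i ⊆ N i)
    (hrem : ∀ i, ((N i) \ (N' i)).card ≤ K)
    (hKr : K < r)
    (hrob : rRobust N r) :
    rRobust N' (r - K) := by
  intro S₁ S₂ h1 h2 hd
  have key : ∀ (i : V) (S : Finset V), r ≤ ((N i) \ S).card →
      r - K ≤ ((N' i) \ S).card := by
    intro i S hr
    have hsubset : (N i) \ S ⊆ ((N' i) \ S) ∪ ((N i) \ (N' i)) := by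
      intro x hx
      simp only [mem_sdiff, mem_union] at hx ⊢
      by_cases hx' : x ∈ N' i
      · exact Or.inl ⟨hx', hx.2⟩
      · exact Or.inr ⟨hx.1, hx'⟩
    have := (card_le_card hsubset).trans (card_union_le _ _)
    have := hrem i
    omega
  rcases hrob S₁ S₂ h1 h2 hd with ⟨i, hi, hri⟩ | ⟨i, hi, hri⟩
  · exact Or.inl ⟨i, hi, key i S₁ hri⟩
  · exact Or.inr ⟨i, hi, key i S₂ hri⟩
end

section
/- If a directed graph G is r-robust for some r ≥ 1, then G contains a rooted spanning tree (i.e., there exists a node from which every other node is reachable by a directed path). -/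
open Finset

/-- An edge `(j, i)` (i.e. `j ∈ N i`) means `j` influences `i`; a rooted spanning
tree exists if some root reaches every vertex along directed (influence) edges. -/
theorem stmt4 {V : Type*} [Fintype V] [DecidableEq V] [Nonempty V]
    (N : V → Finset V) (r : ℕ) (hr : 1 ≤ r) (hrob : rRobust N r) :
    ∃ root : V, ∀ v : V,
      Relation.ReflTransGen (fun a b => a ∈ N b) root v := by
  classical
  set reach : V → V → Prop := fun a b => Relation.ReflTransGen (fun a b => a ∈ N b) a b with hreach
  -- a set is closed if it has no in-neighbors outside
  set Closed : Finset V → Prop := fun S => ∀ i ∈ S, N i ⊆ S with hClosed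
  -- two nonempty closed sets cannot be disjoint
  have key : ∀ S₁ S₂ : Finset V, S₁.Nonempty → S₂.Nonempty → Closed S₁ → Closed S₂ →
      ¬ Disjoint S₁ S₂ := by
    intro S₁ S₂ h₁ h₂ c₁ c₂ hd
    have notr : ∀ S : Finset V, Closed S → ¬ rReachable N S r := by
      intro S cS ⟨i, hi, hcard⟩
      have : ((N i) \ S).Nonempty := Finset.card_pos.mp (lt_of_lt_of_le hr hcard)
      obtain ⟨j, hj⟩ := this
      rw [Finset.mem_sdiff] at hj
      exact hj.2 (cS i hi hj.1)
    rcases hrob S₁ S₂ h₁ h₂ hd with h | h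
    · exact notr S₁ c₁ h
    · exact notr S₂ c₂ h
  -- ancestor sets are closed and nonempty
  set A : V → Finset V := fun v => univ.filter (fun u => reach u v) with hA
  have hAmem : ∀ u v, u ∈ A v ↔ reach u v := by
    intro u v; simp [hA]
  have hAne : ∀ v, (A v).Nonempty := fun v => ⟨v, (hAmem v v).mpr Relation.ReflTransGen.refl⟩
  have hAcl : ∀ v, Closed (A v) := by
    intro v i hi j hj
    rw [hAmem] at hi ⊢
    exact Relation.ReflTransGen.head hj hi
  -- intersection of all ancestor sets is nonempty
  have main : ∀ T : Finset V, ∃ S : Finset V, S.Nonempty ∧ Closed S ∧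
      ∀ v ∈ T, ∀ u ∈ S, reach u v := by
    intro T
    induction T using Finset.induction with
    | empty =>
      exact ⟨univ, univ_nonempty, fun i _ j _ => mem_univ j, by simp⟩
    | @insert v T hv ih =>
      obtain ⟨S, hSne, hScl, hS⟩ := ih
      refine ⟨S ∩ A v, ?_, ?_, ?_⟩
      · rcases Finset.not_disjoint_iff.mp (key S (A v) hSne (hAne v) hScl (hAcl v)) with
          ⟨x, hx1, hx2⟩
        exact ⟨x, Finset.mem_inter.mpr ⟨hx1, hx2⟩⟩
      · intro i hi j hj
        rw [Finset.mem_inter] at hi ⊢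
        exact ⟨hScl i hi.1 hj, hAcl v i hi.2 hj⟩
      · intro w hw u hu
        rw [Finset.mem_inter] at hu
        rcases Finset.mem_insert.mp hw with rfl | hw
        · exact (hAmem u w).mp hu.2
        · exact hS w hw u hu.1
  obtain ⟨S, hSne, _, hS⟩ := main univ
  obtain ⟨root, hroot⟩ := hSne
  exact ⟨root, fun v => hS v (mem_univ v) root hroot⟩
end

section
/- Let G = (V,E) be an r-robust directed graph. Form G' by adding a new vertex v_new along with a set of new edges incident to v_new such that v_new has in-degree at least r. Then G' is r-robust. -/
open Finset

/-- Adding a new vertex (`none` in `Option V`) with in-degree at least `r`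
(all its in-neighbors coming from the original vertices) to an `r`-robust graph,
keeping the edges among original vertices unchanged, yields an `r`-robust graph. -/
theorem stmt7 {V : Type*} [Fintype V] [DecidableEq V]
    (N : V → Finset V) (r : ℕ) (hrob : rRobust N r)
    (N' : Option V → Finset (Option V))
    (hold : ∀ i j : V, some j ∈ N' (some i) ↔ j ∈ N i)
    (hnew_from_old : none ∉ N' none)
    (hdeg : r ≤ (N' none).card) :
    rRobust N' r := by
  classical
  intro S₁ S₂ h₁ h₂ hdis
  set T₁ := Finset.univ.filter (fun v : V => some v ∈ S₁) with hT₁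
  set T₂ := Finset.univ.filter (fun v : V => some v ∈ S₂) with hT₂
  have key : ∀ S : Finset (Option V), (Finset.univ.filter (fun v : V => some v ∈ S)) = ∅ →
      S.Nonempty → rReachable N' S r := by
    intro S hempty hS
    have hmem : ∀ v : V, some v ∉ S := by
      intro v hv
      have : v ∈ Finset.univ.filter (fun v : V => some v ∈ S) :=
        Finset.mem_filter.mpr ⟨Finset.mem_univ v, hv⟩
      simp [hempty] at this
    have hnone : none ∈ S := by
      obtain ⟨x, hx⟩ := hS
      cases x with
      | none => exact hx
      | some v => exact absurd hx (hmem v)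
    refine ⟨none, hnone, ?_⟩
    have hEq : N' none \ S = N' none := by
      ext x
      simp only [Finset.mem_sdiff, and_iff_left_iff_imp]
      intro hx hxS
      cases x with
      | none => exact hnew_from_old hx
      | some v => exact hmem v hxS
    rw [hEq]; exact hdeg
  by_cases hT1e : T₁ = ∅
  · exact Or.inl (key S₁ hT1e h₁)
  by_cases hT2e : T₂ = ∅
  · exact Or.inr (key S₂ hT2e h₂)
  have hn₁ : T₁.Nonempty := Finset.nonempty_iff_ne_empty.mpr hT1e
  have hn₂ : T₂.Nonempty := Finset.nonempty_iff_ne_empty.mpr hT2e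
  have hdis' : Disjoint T₁ T₂ := by
    rw [Finset.disjoint_left] at hdis ⊢
    intro v hv1 hv2
    exact hdis (Finset.mem_filter.mp hv1).2 (Finset.mem_filter.mp hv2).2
  have lift : ∀ (S : Finset (Option V)) (T : Finset V),
      T = Finset.univ.filter (fun v : V => some v ∈ S) →
      rReachable N T r → rReachable N' S r := by
    rintro S T hT ⟨i, hi, hcard⟩
    refine ⟨some i, by rw [hT] at hi; exact (Finset.mem_filter.mp hi).2, ?_⟩
    calc r ≤ (N i \ T).card := hcard
      _ = ((N i \ T).image some).card :=
          (Finset.card_image_of_injective _ (Option.some_injective V)).symm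
      _ ≤ (N' (some i) \ S).card := Finset.card_le_card (by
          intro x hx
          simp only [Finset.mem_image] at hx
          obtain ⟨j, hj, rfl⟩ := hx
          rw [Finset.mem_sdiff] at hj
          refine Finset.mem_sdiff.mpr ⟨(hold i j).mpr hj.1, fun hjS => hj.2 ?_⟩
          rw [hT]; exact Finset.mem_filter.mpr ⟨Finset.mem_univ j, hjS⟩)
  rcases hrob T₁ T₂ hn₁ hn₂ hdis' with h | h
  · exact Or.inl (lift S₁ T₁ hT₁ h)
  · exact Or.inr (lift S₂ T₂ hT₂ h)
end

section
/- If a directed graph G is (f+1)-robust, then for any f-local set M of vertices, the subgraph induced on V \ M is 1-robust, and hence has a rooted spanning tree. -/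
open Finset

theorem stmt10 {V : Type*} [Fintype V] [DecidableEq V]
    (N : V → Finset V) (f : ℕ) (hrob : rRobust N (f + 1))
    (M : Finset V) (hloc : ∀ i ∉ M, ((N i) ∩ M).card ≤ f)
    (hcard : 2 ≤ Fintype.card {x : V // x ∉ M}) :
    rRobust (fun i : {x : V // x ∉ M} => (N i.1).subtype (fun x => x ∉ M)) 1 ∧
    ∃ root : {x : V // x ∉ M}, ∀ v : {x : V // x ∉ M},
      Relation.ReflTransGen
        (fun a b => a ∈ (N b.1).subtype (fun x => x ∉ M)) root v := by
  classical
  set W := {x : V // x ∉ M} with hW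
  set N' : W → Finset W := fun i => (N i.1).subtype (fun x => x ∉ M) with hN'
  have key : ∀ S : Finset W, rReachable N (S.image Subtype.val) (f + 1) → rReachable N' S 1 := by
    intro S h
    obtain ⟨i, hiS, hcard'⟩ := h
    obtain ⟨⟨i, hiM⟩, hiS', rfl⟩ := Finset.mem_image.mp hiS
    set A := N i \ S.image Subtype.val with hA
    have hsub : A ∩ M ⊆ N i ∩ M := inter_subset_inter sdiff_subset le_rfl
    have h1 : (A ∩ M).card ≤ f := le_trans (card_le_card hsub) (hloc i hiM)
    have h2 : (A ∩ M).card + (A \ M).card = A.card := card_inter_add_card_sdiff A M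
    have h3 : 1 ≤ (A \ M).card := by omega
    obtain ⟨j, hj⟩ := card_pos.mp h3
    have hjA : j ∈ A := (mem_sdiff.mp hj).1
    have hjM : j ∉ M := (mem_sdiff.mp hj).2
    refine ⟨⟨i, hiM⟩, hiS', ?_⟩
    have hmem : (⟨j, hjM⟩ : W) ∈ N' ⟨i, hiM⟩ \ S := by
      rw [mem_sdiff]
      constructor
      · simp only [hN', Finset.mem_subtype]
        exact (mem_sdiff.mp hjA).1
      · intro hmemS
        exact (mem_sdiff.mp hjA).2 (Finset.mem_image.mpr ⟨_, hmemS, rfl⟩)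
    exact card_pos.mpr ⟨_, hmem⟩
  have h1robust : rRobust N' 1 := by
    intro S₁ S₂ h1 h2 hd
    have hd' : Disjoint (S₁.image Subtype.val) (S₂.image Subtype.val) :=
      (Finset.disjoint_image Subtype.val_injective).mpr hd
    rcases hrob _ _ (h1.image _) (h2.image _) hd' with h | h
    · exact Or.inl (key _ h)
    · exact Or.inr (key _ h)
  refine ⟨h1robust, ?_⟩
  have hne : Nonempty W :=
    Fintype.card_pos_iff.mp (lt_of_lt_of_le (by norm_num) hcard)
  set step : W → W → Prop := fun a b => a ∈ N' b with hstep
  set B : W → Finset W := fun v => univ.filter (fun u => Relation.ReflTransGen step u v) with hB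
  have hBself : ∀ v, v ∈ B v := fun v => mem_filter.mpr ⟨mem_univ _, .refl⟩
  have hBclosed : ∀ v u j, u ∈ B v → j ∈ N' u → j ∈ B v := by
    intro v u j hu hj
    exact mem_filter.mpr ⟨mem_univ _, .head hj (mem_filter.mp hu).2⟩
  have hnotreach : ∀ v, ¬ rReachable N' (B v) 1 := by
    rintro v ⟨i, hi, hc⟩
    obtain ⟨j, hj⟩ := card_pos.mp hc
    rw [mem_sdiff] at hj
    exact hj.2 (hBclosed v i j hi hj.1)
  obtain ⟨v, -, hmin⟩ := Finset.exists_min_image univ (fun v => (B v).card) univ_nonempty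
  refine ⟨v, fun u => ?_⟩
  have hint : (B v ∩ B u).Nonempty := by
    by_contra h
    rw [not_nonempty_iff_eq_empty, ← disjoint_iff_inter_eq_empty] at h
    rcases h1robust (B v) (B u) ⟨v, hBself v⟩ ⟨u, hBself u⟩ h with hr | hr
    exacts [hnotreach v hr, hnotreach u hr]
  obtain ⟨w, hw⟩ := hint
  rw [mem_inter] at hw
  have hBw_sub_v : B w ⊆ B v := fun x hx =>
    mem_filter.mpr ⟨mem_univ _, (mem_filter.mp hx).2.trans (mem_filter.mp hw.1).2⟩
  have hBw_sub_u : B w ⊆ B u := fun x hx =>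
    mem_filter.mpr ⟨mem_univ _, (mem_filter.mp hx).2.trans (mem_filter.mp hw.2).2⟩
  have heq : B w = B v := eq_of_subset_of_card_le hBw_sub_v (hmin w (mem_univ w))
  have hvBu : v ∈ B u := hBw_sub_u (heq ▸ hBself v)
  exact (mem_filter.mp hvBu).2
end

section
/- If a directed graph G is (2f+1)-robust and M is an f-local set of vertices, then the subgraph induced on the normal nodes N = V \ M is (f+1)-robust. -/
open Finset

theorem stmt11 {V : Type*} [Fintype V] [DecidableEq V]
    (N : V → Finset V) (f : ℕ) (hrob : rRobust N (2 * f + 1))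
    (M : Finset V) (hloc : ∀ i ∉ M, ((N i) ∩ M).card ≤ f)
    (hcard : 2 ≤ Fintype.card {x : V // x ∉ M}) :
    rRobust (fun i : {x : V // x ∉ M} => (N i.1).subtype (fun x => x ∉ M)) (f + 1) := by
  intro S₁ S₂ h1 h2 hdisj
  set e : {x : V // x ∉ M} ↪ V := Function.Embedding.subtype _
  have key : ∀ S : Finset {x : V // x ∉ M},
      rReachable N (S.map e) (2 * f + 1) →
      rReachable (fun i : {x : V // x ∉ M} => (N i.1).subtype (fun x => x ∉ M)) S (f + 1) := by
    intro S ⟨i, hiS, hi⟩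
    obtain ⟨i', hi'S, rfl⟩ := Finset.mem_map.mp hiS
    refine ⟨i', hi'S, ?_⟩
    have hmap : ((N i'.1).subtype (fun x => x ∉ M) \ S).map e
        = (N i'.1).filter (fun x => x ∉ M) \ S.map e := by
      ext x
      simp only [e, Finset.mem_map, Finset.mem_sdiff, Finset.mem_subtype,
        Function.Embedding.coe_subtype, Finset.mem_filter]
      constructor
      · rintro ⟨a, ⟨ha1, ha2⟩, rfl⟩
        exact ⟨⟨ha1, a.2⟩, fun ⟨b, hb, hba⟩ => ha2 (Subtype.ext hba.symm ▸ hb)⟩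
      · rintro ⟨⟨hx1, hx2⟩, hx3⟩
        exact ⟨⟨x, hx2⟩, ⟨hx1, fun hm => hx3 ⟨_, hm, rfl⟩⟩, rfl⟩
    have hsub : N i'.1 \ S.map e ⊆
        ((N i'.1).filter (fun x => x ∉ M) \ S.map e) ∪ (N i'.1 ∩ M) := by
      intro x hx
      rw [Finset.mem_sdiff] at hx
      by_cases hxM : x ∈ M
      · exact Finset.mem_union_right _ (Finset.mem_inter.mpr ⟨hx.1, hxM⟩)
      · exact Finset.mem_union_left _ (Finset.mem_sdiff.mpr
          ⟨Finset.mem_filter.mpr ⟨hx.1, hxM⟩, hx.2⟩)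
    have hc := (Finset.card_le_card hsub).trans (Finset.card_union_le _ _)
    have hloc' := hloc i'.1 i'.2
    have hcard' : ((N i'.1).subtype (fun x => x ∉ M) \ S).card
        = ((N i'.1).filter (fun x => x ∉ M) \ S.map e).card := by
      rw [← hmap, Finset.card_map]
    show f + 1 ≤ ((N i'.1).subtype (fun x => x ∉ M) \ S).card
    rw [hcard']
    simp only [e, Function.Embedding.coe_subtype] at hi hc ⊢
    omega
  have := hrob (S₁.map e) (S₂.map e) h1.map h2.map
    (Finset.disjoint_map e |>.mpr hdisj)
  rcases this with h | h
  · exact Or.inl (key _ h)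
  · exact Or.inr (key _ h)
end

section
/- Under the f-local malicious model, if the graph G is strongly (2f+1)-robust, then the Certified Propagation Algorithm succeeds: every normal node eventually accepts the source's value. Formally: let M be an f-local set not containing the source s, and let A_t be the set of nodes having accepted the broadcast value by time t, with A_0 = {s} and A_{t+1} = A_t ∪ {normal i : i is an out-neighbor of s, or i has at least f+1 in-neighbors in A_t \ M ∪ (accepted normal nodes)}. Then the increasing sequence of accepted normal-node sets eventually equals all normal nodes. -/
open Finset

def stronglyRRobust {V : Type*} [Fintype V] [DecidableEq V]
    (N : V → Finset V) (r : ℕ) : Prop :=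
  ∀ S : Finset V, S.Nonempty →
    rReachable N S r ∨ ∃ i ∈ S, Sᶜ ⊆ N i

/-- If the network is strongly `(2f+1)`-robust and `M` is an `f`-local set of
malicious nodes not containing the source `s`, then the Certified Propagation
Algorithm succeeds: the monotone sequence of accepted sets eventually contains
every normal node. -/
theorem stmt16 {V : Type*} [Fintype V] [DecidableEq V]
    (N : V → Finset V) (f : ℕ) (hrob : stronglyRRobust N (2 * f + 1))
    (M : Finset V) (hloc : ∀ i ∉ M, ((N i) ∩ M).card ≤ f)
    (s : V) (hs : s ∉ M)
    (A : ℕ → Finset V)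
    (hA0 : A 0 = {s})
    (hAsucc : ∀ t : ℕ, A (t + 1) = A t ∪
      Finset.univ.filter (fun i =>
        i ∉ M ∧ (s ∈ N i ∨ f + 1 ≤ ((N i) ∩ (A t \ M)).card))) :
    ∃ T : ℕ, ∀ i : V, i ∉ M → i ∈ A T := by
  have hmono : ∀ t, A t ⊆ A (t + 1) := by
    intro t
    rw [hAsucc t]; exact subset_union_left
  -- there is a stabilization time
  have hstab : ∃ T, A T = A (T + 1) := by
    by_contra h
    push_neg at h
    have hcard : ∀ t, t + 1 ≤ (A t).card := by
      intro t
      induction t with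
      | zero => simp [hA0]
      | succ n ih =>
        have hss : A n ⊂ A (n + 1) := Finset.ssubset_iff_subset_ne.2 ⟨hmono n, h n⟩
        have := Finset.card_lt_card hss
        omega
    have h1 := hcard (Fintype.card V)
    have h2 : (A (Fintype.card V)).card ≤ Fintype.card V := Finset.card_le_univ _
    omega
  obtain ⟨T, hT⟩ := hstab
  refine ⟨T, ?_⟩
  by_contra hcon
  push_neg at hcon
  obtain ⟨j, hjM, hjA⟩ := hcon
  -- the set of normal nodes that never accept
  set S : Finset V := Finset.univ.filter (fun i => i ∉ M ∧ i ∉ A T) with hS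
  have hSne : S.Nonempty := ⟨j, by simp [hS, hjM, hjA]⟩
  have hmemS : ∀ i, i ∈ S ↔ i ∉ M ∧ i ∉ A T := by
    intro i; simp [hS]
  -- fixed point: the filter at time T is inside A T
  have hfix : ∀ i, i ∉ M → (s ∈ N i ∨ f + 1 ≤ ((N i) ∩ (A T \ M)).card) → i ∈ A T := by
    intro i hi hcond
    have : i ∈ A (T + 1) := by
      rw [hAsucc T]
      exact Finset.mem_union_right _ (by simp only [Finset.mem_filter, Finset.mem_univ, true_and]; exact ⟨hi, hcond⟩)
    rwa [← hT] at this
  have hsA : s ∈ A T := by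
    have h0 : s ∈ A 0 := by simp [hA0]
    have : ∀ t, s ∈ A t := by
      intro t; induction t with
      | zero => exact h0
      | succ n ih => exact hmono n ih
    exact this T
  rcases hrob S hSne with ⟨i, hiS, hir⟩ | ⟨i, hiS, hic⟩
  · -- r-reachable case
    obtain ⟨hiM, hiA⟩ := (hmemS i).1 hiS
    -- N i \ S ⊆ (N i ∩ M) ∪ (N i ∩ (A T \ M))
    have hsub : (N i) \ S ⊆ ((N i) ∩ M) ∪ ((N i) ∩ (A T \ M)) := by
      intro x hx
      obtain ⟨hxN, hxS⟩ := Finset.mem_sdiff.1 hx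
      by_cases hxM : x ∈ M
      · exact Finset.mem_union_left _ (Finset.mem_inter.2 ⟨hxN, hxM⟩)
      · have hxA : x ∈ A T := by
          by_contra hxA
          exact hxS ((hmemS x).2 ⟨hxM, hxA⟩)
        exact Finset.mem_union_right _
          (Finset.mem_inter.2 ⟨hxN, Finset.mem_sdiff.2 ⟨hxA, hxM⟩⟩)
    have h1 : ((N i) \ S).card ≤ ((N i) ∩ M).card + ((N i) ∩ (A T \ M)).card :=
      le_trans (Finset.card_le_card hsub) (Finset.card_union_le _ _)
    have h2 := hloc i hiM
    have h3 : f + 1 ≤ ((N i) ∩ (A T \ M)).card := by omega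
    exact hiA (hfix i hiM (Or.inr h3))
  · -- complement case
    obtain ⟨hiM, hiA⟩ := (hmemS i).1 hiS
    have hsSc : s ∈ Sᶜ := by
      simp only [Finset.mem_compl, hmemS]
      tauto
    exact hiA (hfix i hiM (Or.inl (hic hsSc)))
end

section
/- There exists a graph G and an integer f ≥ 1 such that X(G) ≤ 2f but G is strongly (2f+1)-robust, where X(G) = min over non-adjacent pairs (v,s) of the number of neighbors of v strictly closer to s than v. Concretely, for f = 1, the 8-vertex graph consisting of a 5-clique {1,...,5}, vertices 6 and 7 adjacent to {2,3,4} and {3,4,5} respectively, and vertex 8 adjacent to {3,4,6,7}, satisfies X(G) ≤ 2 and is strongly 3-robust. -/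
open Finset

/-- The underlying relation for the 8-vertex example graph: a 5-clique on
vertices `0,…,4`; vertex `5` adjacent to `1,2,3`; vertex `6` adjacent to
`2,3,4`; vertex `7` adjacent to `2,3,5,6`. (0-indexed version of the paper's
vertices `1,…,8`.) -/
def e8 : Fin 8 → Fin 8 → Prop := fun a b =>
  (a.val < 5 ∧ b.val < 5) ∨
  (a = 5 ∧ (b = 1 ∨ b = 2 ∨ b = 3)) ∨
  (a = 6 ∧ (b = 2 ∨ b = 3 ∨ b = 4)) ∨
  (a = 7 ∧ (b = 2 ∨ b = 3 ∨ b = 5 ∨ b = 6))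

def G8 : SimpleGraph (Fin 8) := SimpleGraph.fromRel e8

instance : DecidableRel G8.Adj := fun a b => by
  unfold G8 e8
  exact inferInstanceAs (Decidable (a ≠ b ∧ _))

lemma dist70 : G8.dist 7 0 ≤ 2 := by
  have h := SimpleGraph.dist_le (SimpleGraph.Walk.cons (by decide : G8.Adj 7 2)
    ((by decide : G8.Adj 2 0).toWalk))
  simpa using h

lemma two_le_dist (v a : Fin 8) (hva : G8.Adj v a) (ha0 : G8.Adj a 0)
    (hv0 : v ≠ 0) (hadj : ¬ G8.Adj v 0) : 2 ≤ G8.dist v 0 := by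
  have hr : G8.Reachable v 0 := ⟨SimpleGraph.Walk.cons hva ha0.toWalk⟩
  have h0 : G8.dist v 0 ≠ 0 := fun h => hv0 (hr.dist_eq_zero_iff.mp h)
  have h1 : G8.dist v 0 ≠ 1 := fun h => hadj (SimpleGraph.dist_eq_one_iff_adj.mp h)
  omega

lemma robustF : ∀ S : Finset (Fin 8), S.Nonempty →
    (∃ i ∈ S, 3 ≤ (G8.neighborFinset i \ S).card) ∨
    (∃ i ∈ S, ∀ j ∉ S, G8.Adj i j) := by
  set_option maxRecDepth 10000 in decide

/-- There exist a graph `G` and `f ≥ 1` with `X(G) ≤ 2f` (some non-adjacent pair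
`(v,s)` has at most `2f` neighbors of `v` strictly closer to `s`) that is
nevertheless strongly `(2f+1)`-robust: for every nonempty vertex subset `S`,
either some node of `S` has at least `2f+1` neighbors outside `S`, or some node
of `S` is adjacent to every vertex outside `S`. The graph `G8` with `f = 1`
witnesses this. -/
theorem stmt17 :
    ∃ f : ℕ, 1 ≤ f ∧
      (∃ v s : Fin 8, v ≠ s ∧ ¬ G8.Adj v s ∧
        ({u : Fin 8 | G8.Adj v u ∧ G8.dist u s < G8.dist v s}).ncard ≤ 2 * f) ∧
      (∀ S : Set (Fin 8), S.Nonempty →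
        (∃ i ∈ S, 2 * f + 1 ≤ (G8.neighborSet i \ S).ncard) ∨
        (∃ i ∈ S, ∀ j ∉ S, G8.Adj i j)) := by
  refine ⟨1, le_refl 1, ⟨7, 0, by decide, by decide, ?_⟩, ?_⟩
  · have hsub : {u : Fin 8 | G8.Adj 7 u ∧ G8.dist u 0 < G8.dist 7 0} ⊆ {2, 3} := by
      intro u hu
      obtain ⟨hadj, hlt⟩ := hu
      have henum : u = 2 ∨ u = 3 ∨ u = 5 ∨ u = 6 := by
        clear hlt; revert hadj; revert u; decide
      rcases henum with h | h | h | h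
      · exact Or.inl h
      · exact Or.inr h
      · exfalso
        subst h
        have h2 := two_le_dist 5 1 (by decide) (by decide) (by decide) (by decide)
        have h3 := dist70
        omega
      · exfalso
        subst h
        have h2 := two_le_dist 6 2 (by decide) (by decide) (by decide) (by decide)
        have h3 := dist70
        omega
    calc ({u : Fin 8 | G8.Adj 7 u ∧ G8.dist u 0 < G8.dist 7 0}).ncard
        ≤ ({2, 3} : Set (Fin 8)).ncard := Set.ncard_le_ncard hsub (Set.toFinite _)
      _ = 2 := Set.ncard_pair (by decide)
      _ ≤ 2 * 1 := by norm_num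
  · intro S hS
    classical
    set T := S.toFinite.toFinset with hT
    have hmem : ∀ j, j ∈ T ↔ j ∈ S := fun j => S.toFinite.mem_toFinset
    have hTn : T.Nonempty := by
      obtain ⟨x, hx⟩ := hS
      exact ⟨x, (hmem x).mpr hx⟩
    rcases robustF T hTn with ⟨i, hi, hc⟩ | ⟨i, hi, hc⟩
    · refine Or.inl ⟨i, (hmem i).mp hi, ?_⟩
      have : G8.neighborSet i \ S = ↑(G8.neighborFinset i \ T) := by
        ext j
        simp [hmem]
      rw [this, Set.ncard_coe_finset]
      exact hc
    · exact Or.inr ⟨i, (hmem i).mp hi, fun j hj => hc j (fun h => hj ((hmem j).mp h))⟩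
end
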